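/- Let f be a monotone submodular set function on a finite ground set U, X* a fixed set (an optimal solution) and X any set. Then f(X*) ≤ f(X) + r·δ, where δ = max over x ∈ X*\X of (f(X∪{x}) − f(X)) and r = |X*|, assuming X*\X is nonempty (or δ ≥ 0 when X* ⊆ X). -/
import Mathlib


theorem monotone_submodular_max_marginal_bound
    {U : Type*} [DecidableEq U] [Fintype U] (f : Finset U → ℝ)
    (hmono : ∀ A B : Finset U, A ⊆ B → f A ≤ f B)
    (hsub : ∀ A B : Finset U, f (A ∪ B) + f (A ∩ B) ≤ f A + f B)
    (X Xstar : Finset U) (hne : (Xstar \ X).Nonempty) :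
    f Xstar ≤ f X + (Xstar.card : ℝ) *
      ((Xstar \ X).sup' hne (fun x => f (insert x X) - f X)) := by
  set δ := (Xstar \ X).sup' hne (fun x => f (insert x X) - f X) with hδ
  have key : ∀ S : Finset U, f (X ∪ S) ≤ f X + ∑ x ∈ S, (f (insert x X) - f X) := by
    intro S
    induction S using Finset.induction_on with
    | empty => simp
    | @insert a S ha ih =>
      have h1 := hsub (X ∪ S) (insert a X)
      have e1 : (X ∪ S) ∪ insert a X = X ∪ insert a S := by
        ext y; simp [Finset.mem_union, Finset.mem_insert]; tauto
      have e2 : X ⊆ (X ∪ S) ∩ insert a X := by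
        intro y hy; simp [Finset.mem_inter, Finset.mem_union, Finset.mem_insert, hy]
      have h2 := hmono _ _ e2
      rw [e1] at h1
      rw [Finset.sum_insert ha]
      linarith
  -- nonneg of δ
  obtain ⟨x0, hx0⟩ := hne
  have hδ0 : 0 ≤ δ := by
    have := Finset.le_sup' (fun x => f (insert x X) - f X) hx0
    have hm : f X ≤ f (insert x0 X) := hmono _ _ (Finset.subset_insert _ _)
    linarith
  have hsum : ∑ x ∈ Xstar \ X, (f (insert x X) - f X) ≤ ((Xstar \ X).card : ℝ) * δ := by
    calc ∑ x ∈ Xstar \ X, (f (insert x X) - f X) ≤ ∑ _x ∈ Xstar \ X, δ := by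
          apply Finset.sum_le_sum
          intro x hx
          exact Finset.le_sup' (fun x => f (insert x X) - f X) hx
      _ = ((Xstar \ X).card : ℝ) * δ := by simp [mul_comm]
  have hcard : ((Xstar \ X).card : ℝ) ≤ (Xstar.card : ℝ) := by
    exact_mod_cast Finset.card_le_card (Finset.sdiff_subset)
  have hXs : f Xstar ≤ f (X ∪ (Xstar \ X)) := by
    apply hmono
    intro y hy
    simp [Finset.mem_union, Finset.mem_sdiff, hy]
  have := key (Xstar \ X)
  nlinarith [mul_le_mul_of_nonneg_right hcard hδ0]
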